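/- Let A, B, C be symmetric positive definite 2×2 real matrices (with entries aᵢⱼ, bᵢⱼ, cᵢⱼ) such that a₂₂ = b₂₂ and c₁₁ = a₁₁. Then there exist real numbers t₁, t₂, t₃, t₄ such that, with T₁ := [[t₁, t₂],[0, 1]] and T₂ := [[1, 0],[t₄, t₃]], one has B = T₁ A T₁ᵀ and C = T₂ A T₂ᵀ. -/

import Mathlib

open Matrix

noncomputable section

/-- A state is a triple `(ρ, m, E)` with `ρ : ℝ`, `m : ℝ²`, `E` a 2×2 real matrix. -/
abbrev Mat2 := Matrix (Fin 2) (Fin 2) ℝ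

/-- The pressure tensor `p(U) = 2E - (1/ρ) m mᵀ`. -/
def pTensor (ρ : ℝ) (m : Fin 2 → ℝ) (E : Mat2) : Mat2 :=
  (2 : ℝ) • E - ρ⁻¹ • vecMulVec m m

/-- `φ(U; z, u*) = zᵀEz − (m·z)(u*·z) + (ρ/2)(u*·z)²`. -/
def phi (ρ : ℝ) (m : Fin 2 → ℝ) (E : Mat2) (z u : Fin 2 → ℝ) : ℝ :=
  z ⬝ᵥ (E *ᵥ z) - (m ⬝ᵥ z) * (u ⬝ᵥ z) + (ρ / 2) * (u ⬝ᵥ z) ^ 2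

/-- The admissible set `𝒢`: states with positive density and positive definite pressure tensor. -/
def G : Set (ℝ × (Fin 2 → ℝ) × Mat2) :=
  {U | 0 < U.1 ∧ (pTensor U.1 U.2.1 U.2.2).PosDef}

/-- The closed admissible set `𝒢̄`: states (so `E` symmetric) with `ρ ≥ 0` and
`φ(U; z, u*) ≥ 0` for all `z, u*`. -/
def Gbar : Set (ℝ × (Fin 2 → ℝ) × Mat2) :=
  {U | 0 ≤ U.1 ∧ U.2.2.IsSymm ∧ ∀ z u : Fin 2 → ℝ, 0 ≤ phi U.1 U.2.1 U.2.2 z u}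


lemma transpose_fin_two' (a b c d : ℝ) : (!![a, b; c, d])ᵀ = !![a, c; b, d] := by
  ext i j; fin_cases i <;> fin_cases j <;> simp

/-- Lemma 2.7: congruence by triangular matrices between positive definite matrices
sharing a diagonal entry. -/
theorem triangular_congruence_exists (A B C : Mat2)
    (hA : A.PosDef) (hB : B.PosDef) (hC : C.PosDef)
    (hab : A 1 1 = B 1 1) (hca : C 0 0 = A 0 0) :
    ∃ t1 t2 t3 t4 : ℝ,
      B = !![t1, t2; 0, 1] * A * (!![t1, t2; 0, 1])ᵀ ∧
      C = !![1, 0; t4, t3] * A * (!![1, 0; t4, t3])ᵀ := by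

  have symA : A 1 0 = A 0 1 := by
    have h := hA.1.apply 1 0; simp at h; exact h.symm
  have symB : B 1 0 = B 0 1 := by
    have h := hB.1.apply 1 0; simp at h; exact h.symm
  have symC : C 1 0 = C 0 1 := by
    have h := hC.1.apply 1 0; simp at h; exact h.symm
  have diag_pos : ∀ (M : Mat2), M.PosDef → ∀ i, 0 < M i i := by
    intro M hM i
    have := hM.dotProduct_mulVec_pos (x := Pi.single i 1) (by
      intro h
      have := congrFun h i
      simp [Pi.single_eq_same] at this)
    simpa [Matrix.mulVec, dotProduct, Pi.single_apply, Fin.sum_univ_two] using this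
  have hA00 : 0 < A 0 0 := diag_pos A hA 0
  have hA11 : 0 < A 1 1 := diag_pos A hA 1
  have hdetA : 0 < A 0 0 * A 1 1 - A 0 1 * A 1 0 := by
    have := hA.det_pos; rwa [Matrix.det_fin_two] at this
  have hdetB : 0 < B 0 0 * B 1 1 - B 0 1 * B 1 0 := by
    have := hB.det_pos; rwa [Matrix.det_fin_two] at this
  have hdetC : 0 < C 0 0 * C 1 1 - C 0 1 * C 1 0 := by
    have := hC.det_pos; rwa [Matrix.det_fin_two] at this
  obtain ⟨t1, ht1sq'⟩ : ∃ t1 : ℝ, t1 ^ 2 * (A 0 0 * A 1 1 - A 0 1 * A 1 0)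
      = B 0 0 * B 1 1 - B 0 1 * B 1 0 := by
    refine ⟨Real.sqrt ((B 0 0 * B 1 1 - B 0 1 * B 1 0) / (A 0 0 * A 1 1 - A 0 1 * A 1 0)), ?_⟩
    rw [Real.sq_sqrt (le_of_lt (div_pos hdetB hdetA))]
    field_simp
  obtain ⟨t3, ht3sq'⟩ : ∃ t3 : ℝ, t3 ^ 2 * (A 0 0 * A 1 1 - A 0 1 * A 1 0)
      = C 0 0 * C 1 1 - C 0 1 * C 1 0 := by
    refine ⟨Real.sqrt ((C 0 0 * C 1 1 - C 0 1 * C 1 0) / (A 0 0 * A 1 1 - A 0 1 * A 1 0)), ?_⟩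
    rw [Real.sq_sqrt (le_of_lt (div_pos hdetC hdetA))]
    field_simp
  refine ⟨t1, (B 0 1 - t1 * A 0 1) / A 1 1, t3, (C 1 0 - t3 * A 1 0) / A 0 0, ?_, ?_⟩
  · simp only [symA, symB, ← hab] at ht1sq'
    rw [transpose_fin_two', Matrix.eta_fin_two A, Matrix.mul_fin_two, Matrix.mul_fin_two]
    ext i j
    fin_cases i <;> fin_cases j <;> (try simp) <;> (try field_simp) <;>
      (try simp only [symA, symB, ← hab]) <;>
      first
        | ring1
        | linear_combination ht1sq'
        | linear_combination - ht1sq'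
  · simp only [symA, symC, hca] at ht3sq'
    rw [transpose_fin_two', Matrix.eta_fin_two A, Matrix.mul_fin_two, Matrix.mul_fin_two]
    ext i j
    fin_cases i <;> fin_cases j <;> (try simp) <;> (try field_simp) <;>
      (try simp only [symA, symC, hca]) <;>
      first
        | ring1
        | linear_combination ht3sq'
        | linear_combination - ht3sq'
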